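/- Let t > 0, let f be continuous on [0,t], and let g be continuous on [0,t] with ε ≤ g(s) ≤ M for all s ∈ [0,t], where 0<ε≤M. Set G(r) = ∫₀ʳ g(u) du. Then |∫₀ᵗ f(s)·(exp(G(s) - G(t)) - exp(g(t)(s-t))) ds| ≤ (1/ε - 1/M)·max_{s∈[0,t]}|f(s)|. -/

import Mathlib

open intervalIntegral MeasureTheory Set

lemma integral_exp_lin (c t : ℝ) (hc : c ≠ 0) :
    ∫ s in (0:ℝ)..t, Real.exp (c * (s - t))
      = (1 - Real.exp (-(c * t))) / c := by
  have hD : ∀ s ∈ Set.uIcc (0:ℝ) t,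
      HasDerivAt (fun s => Real.exp (c * (s - t)) / c) (Real.exp (c * (s - t))) s := by
    intro s _
    have h1 : HasDerivAt (fun s : ℝ => c * (s - t)) c s := by
      simpa using (((hasDerivAt_id s).sub_const t).const_mul c)
    have h2 := (h1.exp).div_const c
    rwa [mul_div_cancel_right₀ _ hc] at h2
  have hcont : Continuous fun s => Real.exp (c * (s - t)) := by fun_prop
  rw [intervalIntegral.integral_eq_sub_of_hasDerivAt hD (hcont.intervalIntegrable 0 t)]
  simp [sub_div]

/-- The kernel-freezing error in the D-QSSA analysis:
`|∫₀ᵗ f(s)·(exp(G(s) - G(t)) - exp(g(t)(s-t))) ds| ≤ (1/ε - 1/M)·max_{[0,t]}|f|`,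
where `G(r) = ∫₀ʳ g(u) du` and `ε ≤ g ≤ M` on `[0,t]`. -/
theorem dqssa_kernel_freezing_error_bound
    (t ε M : ℝ) (ht : 0 < t) (hε : 0 < ε) (hεM : ε ≤ M) (f g : ℝ → ℝ)
    (hf : ContinuousOn f (Set.Icc 0 t))
    (hg : ContinuousOn g (Set.Icc 0 t))
    (hgl : ∀ s ∈ Set.Icc (0:ℝ) t, ε ≤ g s)
    (hgu : ∀ s ∈ Set.Icc (0:ℝ) t, g s ≤ M) :
    |∫ s in (0:ℝ)..t,
        f s * (Real.exp ((∫ u in (0:ℝ)..s, g u) - (∫ u in (0:ℝ)..t, g u))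
                - Real.exp (g t * (s - t)))|
      ≤ (1 / ε - 1 / M) * sSup ((fun s => |f s|) '' Set.Icc (0:ℝ) t) := by
  have hM : 0 < M := lt_of_lt_of_le hε hεM
  have huIcc : Set.uIcc (0:ℝ) t = Set.Icc 0 t := Set.uIcc_of_le ht.le
  set F := sSup ((fun s => |f s|) '' Set.Icc (0:ℝ) t) with hFdef
  have hcpt : IsCompact (Set.Icc (0:ℝ) t) := isCompact_Icc
  have hbdd : BddAbove ((fun s => |f s|) '' Set.Icc (0:ℝ) t) :=
    (hcpt.image_of_continuousOn hf.abs).bddAbove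
  have hFle : ∀ s ∈ Set.Icc (0:ℝ) t, |f s| ≤ F := fun s hs =>
    le_csSup hbdd ⟨s, hs, rfl⟩
  have hF0 : (0:ℝ) ≤ F :=
    le_trans (abs_nonneg (f 0)) (hFle 0 ⟨le_refl 0, ht.le⟩)
  -- continuity of the primitive G
  have hgint : MeasureTheory.IntegrableOn g (Set.uIcc 0 t) volume := by
    rw [huIcc]; exact hg.integrableOn_compact hcpt
  have hGcont : ContinuousOn (fun r => ∫ u in (0:ℝ)..r, g u) (Set.Icc 0 t) := by
    rw [← huIcc]; exact intervalIntegral.continuousOn_primitive_interval hgint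
  -- continuity of the integrand
  have hgt : g t ∈ Set.Icc ε M := ⟨hgl t ⟨ht.le, le_refl t⟩, hgu t ⟨ht.le, le_refl t⟩⟩
  have hhcont : ContinuousOn (fun s =>
      f s * (Real.exp ((∫ u in (0:ℝ)..s, g u) - (∫ u in (0:ℝ)..t, g u))
        - Real.exp (g t * (s - t)))) (Set.Icc 0 t) := by
    exact hf.mul (((hGcont.sub continuousOn_const).rexp).sub
      (Continuous.continuousOn (by fun_prop)))
  have hhint : IntervalIntegrable (fun s =>
      f s * (Real.exp ((∫ u in (0:ℝ)..s, g u) - (∫ u in (0:ℝ)..t, g u))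
        - Real.exp (g t * (s - t)))) volume 0 t := by
    apply ContinuousOn.intervalIntegrable; rw [huIcc]; exact hhcont
  -- the bounding function
  set b : ℝ → ℝ := fun s => F * (Real.exp (ε * (s - t)) - Real.exp (M * (s - t)))
    with hbdef
  have hbcont : Continuous b := by fun_prop
  -- pointwise bound
  have hpt : ∀ s ∈ Set.Icc (0:ℝ) t,
      |f s * (Real.exp ((∫ u in (0:ℝ)..s, g u) - (∫ u in (0:ℝ)..t, g u))
        - Real.exp (g t * (s - t)))| ≤ b s := by
    intro s hs
    have hg1 : IntervalIntegrable g volume 0 s := by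
      apply ContinuousOn.intervalIntegrable
      apply hg.mono
      rw [Set.uIcc_of_le hs.1]
      exact Set.Icc_subset_Icc_right hs.2
    have hg2 : IntervalIntegrable g volume s t := by
      apply ContinuousOn.intervalIntegrable
      apply hg.mono
      rw [Set.uIcc_of_le hs.2]
      exact Set.Icc_subset_Icc_left hs.1
    have hsplit : (∫ u in (0:ℝ)..s, g u) - (∫ u in (0:ℝ)..t, g u)
        = -(∫ u in s..t, g u) := by
      rw [← intervalIntegral.integral_add_adjacent_intervals hg1 hg2]; ring
    have hc1 : IntervalIntegrable (fun _ : ℝ => ε) volume s t :=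
      intervalIntegrable_const
    have hc2 : IntervalIntegrable (fun _ : ℝ => M) volume s t :=
      intervalIntegrable_const
    have hlow : ε * (t - s) ≤ ∫ u in s..t, g u := by
      have := intervalIntegral.integral_mono_on hs.2 hc1 hg2
        (fun u hu => hgl u ⟨le_trans hs.1 hu.1, hu.2⟩)
      simpa [mul_comm, smul_eq_mul] using this
    have hhigh : (∫ u in s..t, g u) ≤ M * (t - s) := by
      have := intervalIntegral.integral_mono_on hs.2 hg2 hc2
        (fun u hu => hgu u ⟨le_trans hs.1 hu.1, hu.2⟩)
      simpa [mul_comm, smul_eq_mul] using this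
    rw [hsplit]
    set A := Real.exp (M * (s - t)) with hA
    set B := Real.exp (ε * (s - t)) with hB
    have hst : s - t ≤ 0 := by linarith [hs.2]
    have h1A : A ≤ Real.exp (-(∫ u in s..t, g u)) :=
      Real.exp_le_exp.2 (by nlinarith)
    have h1B : Real.exp (-(∫ u in s..t, g u)) ≤ B :=
      Real.exp_le_exp.2 (by nlinarith)
    have h2A : A ≤ Real.exp (g t * (s - t)) :=
      Real.exp_le_exp.2 (by nlinarith [hgt.2])
    have h2B : Real.exp (g t * (s - t)) ≤ B :=
      Real.exp_le_exp.2 (by nlinarith [hgt.1])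
    have habs : |Real.exp (-(∫ u in s..t, g u)) - Real.exp (g t * (s - t))|
        ≤ B - A := by
      rw [abs_sub_le_iff]; constructor <;> linarith
    calc |f s * (Real.exp (-(∫ u in s..t, g u)) - Real.exp (g t * (s - t)))|
        = |f s| * |Real.exp (-(∫ u in s..t, g u)) - Real.exp (g t * (s - t))| :=
          abs_mul _ _
      _ ≤ F * (B - A) :=
          mul_le_mul (hFle s hs) habs (abs_nonneg _) hF0
      _ = b s := rfl
  -- main chain
  have step1 : |∫ s in (0:ℝ)..t,
      f s * (Real.exp ((∫ u in (0:ℝ)..s, g u) - (∫ u in (0:ℝ)..t, g u))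
        - Real.exp (g t * (s - t)))|
      ≤ ∫ s in (0:ℝ)..t, |f s * (Real.exp ((∫ u in (0:ℝ)..s, g u)
        - (∫ u in (0:ℝ)..t, g u)) - Real.exp (g t * (s - t)))| :=
    intervalIntegral.abs_integral_le_integral_abs ht.le
  have step2 : (∫ s in (0:ℝ)..t, |f s * (Real.exp ((∫ u in (0:ℝ)..s, g u)
        - (∫ u in (0:ℝ)..t, g u)) - Real.exp (g t * (s - t)))|)
      ≤ ∫ s in (0:ℝ)..t, b s := by
    apply intervalIntegral.integral_mono_on ht.le _ (hbcont.intervalIntegrable 0 t) hpt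
    exact hhint.abs
  have hεt : Real.exp (-(M * t)) ≤ Real.exp (-(ε * t)) :=
    Real.exp_le_exp.2 (by nlinarith)
  have step3 : (∫ s in (0:ℝ)..t, b s) ≤ (1 / ε - 1 / M) * F := by
    have hcalc : (∫ s in (0:ℝ)..t, b s)
        = F * ((1 - Real.exp (-(ε * t))) / ε - (1 - Real.exp (-(M * t))) / M) := by
      rw [hbdef]
      rw [intervalIntegral.integral_const_mul]
      rw [intervalIntegral.integral_sub
        ((by fun_prop : Continuous fun s => Real.exp (ε * (s - t))).intervalIntegrable _ _)
        ((by fun_prop : Continuous fun s => Real.exp (M * (s - t))).intervalIntegrable _ _)]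
      rw [integral_exp_lin ε t hε.ne', integral_exp_lin M t hM.ne']
    rw [hcalc]
    have hkey : (1 - Real.exp (-(ε * t))) / ε - (1 - Real.exp (-(M * t))) / M
        ≤ 1 / ε - 1 / M := by
      have h1 : Real.exp (-(M * t)) / M ≤ Real.exp (-(ε * t)) / ε := by
        apply div_le_div₀ (Real.exp_pos _).le hεt hε hεM
      have e1 : (0:ℝ) < Real.exp (-(ε * t)) := Real.exp_pos _
      have e2 : (0:ℝ) < Real.exp (-(M * t)) := Real.exp_pos _
      rw [sub_div, sub_div]
      linarith
    calc F * ((1 - Real.exp (-(ε * t))) / ε - (1 - Real.exp (-(M * t))) / M)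
        ≤ F * (1 / ε - 1 / M) := by
          apply mul_le_mul_of_nonneg_left hkey hF0
      _ = (1 / ε - 1 / M) * F := mul_comm _ _
  linarith
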